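/- Suppose a matrix mutation in direction $i$ sends the integer weight vector $w=(w_1,\dots,w_n)$ to $\bar w$ defined by $\bar w_j=w_j$ for $j\ne i$ and $\bar w_i=\sum_{k: z_{ik}>0} z_{ik}w_k - w_i$. If $Zw^T=0$, then $\bar Z\bar w^T=0$, where $\bar Z$ is the mutation of $Z$ in direction $i$. -/

import Mathlib

private lemma aux_div (c a : ℤ) :
    (|c| * a + c * |a|) / 2 = c * max a 0 + (|c| - c) / 2 * a := by
  set d := (|c| - c) / 2 with hdef
  have hd : 2 * d = |c| - c := by
    rcases abs_cases c with ⟨h, _⟩ | ⟨h, _⟩ <;> omega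
  have hcabs : |c| = 2 * d + c := by omega
  have key : |c| * a + c * |a| = 2 * (c * max a 0 + d * a) := by
    rcases le_or_gt 0 a with ha | ha
    · rw [abs_of_nonneg ha, max_eq_left ha, hcabs]; ring
    · rw [abs_of_neg ha, max_eq_right ha.le, hcabs]; ring
  rw [key, Int.mul_ediv_cancel_left _ two_ne_zero]

/-- If `Z wᵀ = 0` then the mutated weight satisfies `Z̄ w̄ᵀ = 0`. -/
theorem stmt3 (m n : ℕ) (hmn : m ≤ n) (Z : Matrix (Fin m) (Fin n) ℤ)
    (i : Fin m) (iN : Fin n) (hiN : (iN : ℕ) = (i : ℕ))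
    (hzii : Z i iN = 0)
    (Zbar : Matrix (Fin m) (Fin n) ℤ)
    (hZbar : ∀ k : Fin m, ∀ l : Fin n,
      Zbar k l = if k = i ∨ l = iN then - Z k l
        else Z k l + (|Z k iN| * Z i l + Z k iN * |Z i l|) / 2)
    (w wbar : Fin n → ℤ)
    (hw : Z.mulVec w = 0)
    (hwbar1 : ∀ j : Fin n, j ≠ iN → wbar j = w j)
    (hwbar2 : wbar iN = (∑ k : Fin n, if 0 < Z i k then Z i k * w k else 0) - w iN) :
    Zbar.mulVec wbar = 0 := by
  have hrow : ∀ k : Fin m, ∑ l, Z k l * w l = 0 := by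
    intro k
    have := congrFun hw k
    simpa [Matrix.mulVec, dotProduct] using this
  funext k
  simp only [Matrix.mulVec, dotProduct, Pi.zero_apply]
  have hstep : ∑ l, Zbar k l * wbar l
      = (∑ l, Zbar k l * w l) + Zbar k iN * (wbar iN - w iN) := by
    have h1 : ∀ l, Zbar k l * wbar l
        = Zbar k l * w l + (if l = iN then Zbar k iN * (wbar iN - w iN) else 0) := by
      intro l
      by_cases hl : l = iN
      · subst hl; simp; ring
      · simp [hl, hwbar1 l hl]
    rw [Finset.sum_congr rfl fun l _ => h1 l, Finset.sum_add_distrib,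
      Finset.sum_ite_eq' Finset.univ iN]
    simp
  by_cases hk : k = i
  · subst hk
    have hz : ∀ l, Zbar k l = -Z k l := by
      intro l; rw [hZbar]; simp
    rw [hstep]
    have : ∑ l, Zbar k l * w l = -∑ l, Z k l * w l := by
      rw [← Finset.sum_neg_distrib]
      exact Finset.sum_congr rfl fun l _ => by rw [hz l]; ring
    rw [this, hrow k, hz iN, hzii]
    ring
  · set c := Z k iN with hcdef
    have hc : ∀ l, l ≠ iN → Zbar k l = Z k l + (|c| * Z i l + c * |Z i l|) / 2 := by
      intro l hl; rw [hZbar]; simp [hk, hl, hcdef]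
    have hciN : Zbar k iN = -c := by rw [hZbar]; simp [hcdef]
    have hterm : ∀ l, Zbar k l * w l
        = (Z k l * w l + ((|c| * Z i l + c * |Z i l|) / 2) * w l)
          - (if l = iN then 2 * c * w iN else 0) := by
      intro l
      by_cases hl : l = iN
      · subst hl; rw [hciN]; simp [hzii]; ring
      · rw [hc l hl]; simp [hl]; ring
    have hsum1 : ∑ l, Zbar k l * w l
        = (∑ l, ((|c| * Z i l + c * |Z i l|) / 2) * w l) - 2 * c * w iN := by
      rw [Finset.sum_congr rfl fun l _ => hterm l, Finset.sum_sub_distrib,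
        Finset.sum_add_distrib, hrow k, Finset.sum_ite_eq' Finset.univ iN]
      simp
    have hsum2 : ∑ l, ((|c| * Z i l + c * |Z i l|) / 2) * w l
        = c * ∑ l, (if 0 < Z i l then Z i l * w l else 0) := by
      have hterm2 : ∀ l, ((|c| * Z i l + c * |Z i l|) / 2) * w l
          = c * (if 0 < Z i l then Z i l * w l else 0)
            + ((|c| - c) / 2) * (Z i l * w l) := by
        intro l
        rw [aux_div]
        by_cases h : 0 < Z i l
        · rw [max_eq_left h.le]; simp [h]; ring
        · rw [max_eq_right (not_lt.mp h)]; simp [h]; ring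
      rw [Finset.sum_congr rfl fun l _ => hterm2 l, Finset.sum_add_distrib,
        ← Finset.mul_sum, ← Finset.mul_sum, hrow i]
      ring
    rw [hstep, hsum1, hsum2, hciN, hwbar2]
    ring
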